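/- Let z₁, z₂, z₃ be distinct points on the unit circle in ℂ and let P ∈ ℂ with |P| ≠ 1. With σ₁ = z₁ + z₂ + z₃, σ₂ = z₁z₂ + z₂z₃ + z₃z₁, σ₃ = z₁z₂z₃, the isogonal conjugate of P with respect to the triangle z₁z₂z₃ equals (conj(P)²·σ₃ − conj(P)·σ₂ + σ₁ − P)/(1 − |P|²). -/

import Mathlib

set_option maxHeartbeats 4000000


open ComplexConjugate

/-- Weaver's formula: for a triangle `z₁z₂z₃` inscribed in the unit circle and a
point `P` with `|P| ≠ 1`, the isogonal conjugate of `P` (given in barycentric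
coordinates `[l₁²/u : l₂²/v : l₃²/w]` where `[u : v : w]` are barycentrics of
`P` and `lᵢ` the sidelengths) equals
`(conj(P)²σ₃ − conj(P)σ₂ + σ₁ − P)/(1 − |P|²)`. -/
theorem weaver_isogonal_formula (z₁ z₂ z₃ P : ℂ)
    (h₁ : ‖z₁‖ = 1) (h₂ : ‖z₂‖ = 1) (h₃ : ‖z₃‖ = 1)
    (h12 : z₁ ≠ z₂) (h23 : z₂ ≠ z₃) (h13 : z₁ ≠ z₃)
    (hP : ‖P‖ ≠ 1)
    (u v w : ℝ) (hu : u ≠ 0) (hv : v ≠ 0) (hw : w ≠ 0)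
    (hsum : u + v + w = 1)
    (hbary : P = (u : ℂ) * z₁ + (v : ℂ) * z₂ + (w : ℂ) * z₃)
    (s : ℝ)
    (hs : s = (‖z₂ - z₃‖) ^ 2 / u + (‖z₃ - z₁‖) ^ 2 / v
        + (‖z₁ - z₂‖) ^ 2 / w)
    (hs0 : s ≠ 0) :
    (((‖z₂ - z₃‖) ^ 2 / u : ℝ) : ℂ) / (s : ℂ) * z₁
      + (((‖z₃ - z₁‖) ^ 2 / v : ℝ) : ℂ) / (s : ℂ) * z₂
      + (((‖z₁ - z₂‖) ^ 2 / w : ℝ) : ℂ) / (s : ℂ) * z₃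
    = ((conj P) ^ 2 * (z₁ * z₂ * z₃)
        - conj P * (z₁ * z₂ + z₂ * z₃ + z₃ * z₁) + (z₁ + z₂ + z₃) - P)
      / ((1 : ℂ) - ((‖P‖ : ℝ) : ℂ) ^ 2) := by
  have hz₁ : z₁ ≠ 0 := by intro h; simp [h] at h₁
  have hz₂ : z₂ ≠ 0 := by intro h; simp [h] at h₂
  have hz₃ : z₃ ≠ 0 := by intro h; simp [h] at h₃
  have hc₁ : conj z₁ = z₁⁻¹ := by
    rw [Complex.inv_def, Complex.normSq_eq_norm_sq, h₁]; simp
  have hc₂ : conj z₂ = z₂⁻¹ := by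
    rw [Complex.inv_def, Complex.normSq_eq_norm_sq, h₂]; simp
  have hc₃ : conj z₃ = z₃⁻¹ := by
    rw [Complex.inv_def, Complex.normSq_eq_norm_sq, h₃]; simp
  have hD : (‖P‖) ^ 2 ≠ 1 := by
    intro h
    apply hP
    have h0 : (‖P‖ - 1) * (‖P‖ + 1) = 0 := by nlinarith
    rcases mul_eq_zero.mp h0 with h' | h'
    · linarith
    · have := norm_nonneg P; linarith
  have hDC : (1 : ℂ) - ((‖P‖ : ℝ) : ℂ) ^ 2 ≠ 0 := by
    intro h
    apply hD
    have h' : ((‖P‖ : ℝ) : ℂ) ^ 2 = 1 := by linear_combination -h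
    exact_mod_cast h'
  have habsP : (((‖P‖) : ℝ) : ℂ) ^ 2 = P * conj P := by
    rw [← Complex.ofReal_pow, Complex.sq_norm, Complex.mul_conj]
  have hA : ((‖z₂ - z₃‖ : ℝ) : ℂ) ^ 2 = (z₂ - z₃) * (z₂⁻¹ - z₃⁻¹) := by
    rw [← Complex.ofReal_pow, Complex.sq_norm, ← Complex.mul_conj, map_sub, hc₂, hc₃]
  have hB : ((‖z₃ - z₁‖ : ℝ) : ℂ) ^ 2 = (z₃ - z₁) * (z₃⁻¹ - z₁⁻¹) := by
    rw [← Complex.ofReal_pow, Complex.sq_norm, ← Complex.mul_conj, map_sub, hc₃, hc₁]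
  have hC : ((‖z₁ - z₂‖ : ℝ) : ℂ) ^ 2 = (z₁ - z₂) * (z₁⁻¹ - z₂⁻¹) := by
    rw [← Complex.ofReal_pow, Complex.sq_norm, ← Complex.mul_conj, map_sub, hc₁, hc₂]
  have hconjP : conj P = (u : ℂ) * z₁⁻¹ + (v : ℂ) * z₂⁻¹ + (w : ℂ) * z₃⁻¹ := by
    rw [hbary]
    simp [map_add, map_mul, Complex.conj_ofReal, hc₁, hc₂, hc₃]
  have hsC : (s : ℂ) ≠ 0 := by exact_mod_cast hs0
  have huC : (u : ℂ) ≠ 0 := by exact_mod_cast hu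
  have hvC : (v : ℂ) ≠ 0 := by exact_mod_cast hv
  have hwC : (w : ℂ) ≠ 0 := by exact_mod_cast hw
  have hsumC : (u : ℂ) + (v : ℂ) + (w : ℂ) = 1 := by exact_mod_cast hsum
  have hw2 : (w : ℂ) = 1 - (u : ℂ) - (v : ℂ) := by linear_combination hsumC
  have hsEq : (s : ℂ) = (z₂ - z₃) * (z₂⁻¹ - z₃⁻¹) / (u : ℂ)
      + (z₃ - z₁) * (z₃⁻¹ - z₁⁻¹) / (v : ℂ)
      + (z₁ - z₂) * (z₁⁻¹ - z₂⁻¹) / (w : ℂ) := by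
    rw [← hA, ← hB, ← hC, hs]
    push_cast
    ring
  push_cast
  rw [hA, hB, hC]
  have comb : ∀ (x y z a b c t : ℂ), x / t * a + y / t * b + z / t * c
      = (x * a + y * b + z * c) / t := by intros; ring
  rw [comb, div_eq_div_iff hsC hDC]
  rw [habsP, hconjP, hbary, hsEq]
  push_cast
  field_simp [hz₁, hz₂, hz₃, huC, hvC, hwC]
  rw [hw2]
  ring
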